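/- Let n ≥ 2 be an integer and n′ = n/(n−1). Let A be a finite-valued Young function satisfying the ∇₂-condition globally, with Young conjugate Ã, and let N be a Young function. Let Θ(s) = s A⁻¹( (1/s) ∫_{s^{−1/n′}}^∞ Ã( r ∫₀^{1/r} N⁻¹(1/ρ) dρ ) r^{−(n′+1)} dr ), with generalized right-continuous inverse Θ⁻¹(τ) = inf{ s > 0 : Θ(s) > τ }. Then condition (G) holds if and only if there exists δ′ > 0 with ∫₀^{δ′} Θ⁻¹(r)^{−1/n′} dr < ∞. -/

import Mathlib

open MeasureTheory Set Filter
open scoped ENNReal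

/-- A finite-valued Young function: convex, vanishing at `0`, nonnegative on `[0,∞)`,
and not identically zero there. -/
structure IsYoung (A : ℝ → ℝ) : Prop where
  zero : A 0 = 0
  nonneg : ∀ t, 0 ≤ t → 0 ≤ A t
  convex : ConvexOn ℝ (Set.Ici 0) A
  nontrivial : ∃ t, 0 < t ∧ 0 < A t

/-- The Young conjugate `Ã(x) = sup { x t − A(t) : t ≥ 0 }`, with values in `[0,∞]`. -/
noncomputable def conjE (A : ℝ → ℝ) (x : ℝ≥0∞) : ℝ≥0∞ :=
  ⨆ t : {t : ℝ // 0 ≤ t}, (x * ENNReal.ofReal t.1 - ENNReal.ofReal (A t.1))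

/-- The generalized right-continuous inverse `F⁻¹(t) = inf { s ≥ 0 : F(s) > t }`. -/
noncomputable def rcInv (F : ℝ → ℝ) (t : ℝ) : ℝ :=
  sInf {s : ℝ | 0 ≤ s ∧ t < F s}

/-- The generalized right-continuous inverse of a Young function, acting on `[0,∞]`:
`A⁻¹(t) = inf { x ≥ 0 : A(x) > t }` (with `inf ∅ = ∞`). -/
noncomputable def einv (A : ℝ → ℝ) (t : ℝ≥0∞) : ℝ≥0∞ :=
  sInf {x : ℝ≥0∞ | t < ENNReal.ofReal (A x.toReal)}

/-- `Ξ(s) = (1/s) ∫_{s^{−1/n′}}^∞ Ã( r ∫₀^{1/r} N⁻¹(1/ρ) dρ ) r^{−(n′+1)} dr`,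
where `n′ = n/(n−1)`. -/
noncomputable def Xi (A N : ℝ → ℝ) (n : ℕ) (s : ℝ) : ℝ≥0∞ :=
  (ENNReal.ofReal s)⁻¹ *
    ∫⁻ r in Set.Ioi (s ^ (-(((n:ℝ)-1)/n))),
      conjE A (ENNReal.ofReal r *
          ∫⁻ ρ in Set.Ioc (0:ℝ) (1/r), ENNReal.ofReal (rcInv N (1/ρ))) *
        ENNReal.ofReal (r ^ (-((n:ℝ)/((n:ℝ)-1) + 1)))

/-- `Θ(s) = s A⁻¹(Ξ(s))`. -/
noncomputable def Theta (A N : ℝ → ℝ) (n : ℕ) (s : ℝ) : ℝ≥0∞ :=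
  ENNReal.ofReal s * einv A (Xi A N n s)

/-- Condition (G): `∫₀ s^{−1/n′} A⁻¹(Ξ(s)) ds < ∞` near zero. -/
def CondG (A N : ℝ → ℝ) (n : ℕ) : Prop :=
  ∃ δ > (0:ℝ),
    (∫⁻ s in Set.Ioc (0:ℝ) δ,
      ENNReal.ofReal (s ^ (-(((n:ℝ)-1)/n))) * einv A (Xi A N n s)) < ⊤

/-- `A` satisfies the `∇₂`-condition globally. -/
def Nabla2Global (A : ℝ → ℝ) : Prop :=
  ∃ c > (2:ℝ), ∀ t ≥ (0:ℝ), c * A t ≤ A (2 * t)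

/-- The generalized right-continuous inverse `Θ⁻¹(τ) = inf { s > 0 : Θ(s) > τ }` of an
`[0,∞]`-valued function on `(0,∞)`, with values in `[0,∞]` (`inf ∅ = ∞`). -/
noncomputable def invE (Θ : ℝ → ℝ≥0∞) (τ : ℝ) : ℝ≥0∞ :=
  sInf {x : ℝ≥0∞ | ∃ s : ℝ, 0 < s ∧ x = ENNReal.ofReal s ∧ ENNReal.ofReal τ < Θ s}

lemma IsYoung.mul_le {A : ℝ → ℝ} (hA : IsYoung A) {l u : ℝ} (hl : 1 ≤ l) (hu : 0 ≤ u) :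
    l * A u ≤ A (l * u) := by
  have hl0 : 0 < l := lt_of_lt_of_le one_pos hl
  have hmem1 : l * u ∈ Set.Ici (0:ℝ) := mem_Ici.2 (mul_nonneg hl0.le hu)
  have hmem2 : (0:ℝ) ∈ Set.Ici (0:ℝ) := mem_Ici.2 le_rfl
  have ha : (0:ℝ) ≤ 1/l := by positivity
  have hb : (0:ℝ) ≤ 1 - 1/l := by
    have : 1/l ≤ 1 := by rw [div_le_one hl0]; exact hl
    linarith
  have hab : (1/l) + (1 - 1/l) = 1 := by ring
  have h2 := hA.convex.2 hmem1 hmem2 ha hb hab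
  have heq : (1/l) • (l*u) + (1 - 1/l) • (0:ℝ) = u := by
    simp only [smul_eq_mul, mul_zero, add_zero]
    field_simp
  rw [heq, hA.zero, smul_eq_mul, smul_zero] at h2
  have h3 : A u ≤ (1/l) * A (l*u) := by linarith [h2]
  have := mul_le_mul_of_nonneg_left h3 hl0.le
  calc l * A u ≤ l * ((1/l) * A (l*u)) := this
    _ = A (l * u) := by field_simp

lemma einv_mono (A : ℝ → ℝ) : Monotone (einv A) :=
  fun _ _ h => sInf_le_sInf fun _ hx => lt_of_le_of_lt h hx

lemma einv_mul_le {A : ℝ → ℝ} (hA : IsYoung A) {l : ℝ} (hl : 1 ≤ l) (t : ℝ≥0∞) :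
    einv A (ENNReal.ofReal l * t) ≤ ENNReal.ofReal l * einv A t := by
  have hl0 : 0 < l := lt_of_lt_of_le one_pos hl
  have hL0 : ENNReal.ofReal l ≠ 0 := by
    simp only [ne_eq, ENNReal.ofReal_eq_zero, not_le]; exact hl0
  have hLt : ENNReal.ofReal l ≠ ⊤ := ENNReal.ofReal_ne_top
  rw [mul_comm (ENNReal.ofReal l) (einv A t), ← ENNReal.div_le_iff_le_mul (Or.inl hL0) (Or.inl hLt)]
  refine le_sInf fun x hx => ?_
  rw [ENNReal.div_le_iff_le_mul (Or.inl hL0) (Or.inl hLt), mul_comm x]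
  refine sInf_le ?_
  have hx' : t < ENNReal.ofReal (A x.toReal) := hx
  have hxt : x ≠ ⊤ := by
    rintro rfl
    simp only [ENNReal.toReal_top, hA.zero, ENNReal.ofReal_zero] at hx'
    exact (ENNReal.not_lt_zero hx')
  show ENNReal.ofReal l * t < ENNReal.ofReal (A ((ENNReal.ofReal l * x).toReal))
  have htr : (ENNReal.ofReal l * x).toReal = l * x.toReal := by
    rw [ENNReal.toReal_mul, ENNReal.toReal_ofReal hl0.le]
  rw [htr]
  calc ENNReal.ofReal l * t < ENNReal.ofReal l * ENNReal.ofReal (A x.toReal) :=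
        (ENNReal.mul_lt_mul_iff_right hL0 hLt).2 hx'
    _ = ENNReal.ofReal (l * A x.toReal) := (ENNReal.ofReal_mul hl0.le).symm
    _ ≤ ENNReal.ofReal (A (l * x.toReal)) :=
        ENNReal.ofReal_le_ofReal (hA.mul_le hl ENNReal.toReal_nonneg)

lemma theta_mono (A N : ℝ → ℝ) (n : ℕ) (hA : IsYoung A) (hnn : (0:ℝ) ≤ ((n:ℝ)-1)/n) :
    Monotone (Theta A N n) := by
  intro s₁ s₂ h
  rcases le_or_gt s₁ 0 with h1 | h1
  · have : ENNReal.ofReal s₁ = 0 := ENNReal.ofReal_eq_zero.2 h1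
    simp [Theta, this]
  · have h2 : 0 < s₂ := h1.trans_le h
    set Φ : ℝ → ℝ≥0∞ := fun r => conjE A (ENNReal.ofReal r *
          ∫⁻ ρ in Set.Ioc (0:ℝ) (1/r), ENNReal.ofReal (rcInv N (1/ρ))) *
        ENNReal.ofReal (r ^ (-((n:ℝ)/((n:ℝ)-1) + 1))) with hΦ
    have hxi : (∫⁻ r in Set.Ioi (s₁ ^ (-(((n:ℝ)-1)/n))), Φ r)
        ≤ ∫⁻ r in Set.Ioi (s₂ ^ (-(((n:ℝ)-1)/n))), Φ r := by
      refine lintegral_mono_set (Set.Ioi_subset_Ioi ?_)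
      exact Real.rpow_le_rpow_of_nonpos h1 h (neg_nonpos.2 hnn)
    have e10 : ENNReal.ofReal s₁ ≠ 0 := by
      simp only [ne_eq, ENNReal.ofReal_eq_zero, not_le]; exact h1
    have e20 : ENNReal.ofReal s₂ ≠ 0 := by
      simp only [ne_eq, ENNReal.ofReal_eq_zero, not_le]; exact h2
    have hl : 1 ≤ s₂ / s₁ := (one_le_div h1).2 h
    have harith : (ENNReal.ofReal s₁)⁻¹ = ENNReal.ofReal (s₂/s₁) * (ENNReal.ofReal s₂)⁻¹ := by
      rw [ENNReal.ofReal_div_of_pos h1, div_eq_mul_inv, mul_assoc,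
        mul_comm ((ENNReal.ofReal s₁)⁻¹), ← mul_assoc,
        ENNReal.mul_inv_cancel e20 ENNReal.ofReal_ne_top, one_mul]
    have hXis : Xi A N n s₁ = (ENNReal.ofReal s₁)⁻¹ * ∫⁻ r in Set.Ioi (s₁ ^ (-(((n:ℝ)-1)/n))), Φ r := rfl
    have hXis2 : Xi A N n s₂ = (ENNReal.ofReal s₂)⁻¹ * ∫⁻ r in Set.Ioi (s₂ ^ (-(((n:ℝ)-1)/n))), Φ r := rfl
    calc Theta A N n s₁
        = ENNReal.ofReal s₁ * einv A ((ENNReal.ofReal s₁)⁻¹ * ∫⁻ r in Set.Ioi (s₁ ^ (-(((n:ℝ)-1)/n))), Φ r) := by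
          rw [Theta, hXis]
      _ ≤ ENNReal.ofReal s₁ * einv A ((ENNReal.ofReal s₁)⁻¹ * ∫⁻ r in Set.Ioi (s₂ ^ (-(((n:ℝ)-1)/n))), Φ r) :=
          mul_le_mul_right (einv_mono A (mul_le_mul_right hxi _)) _
      _ = ENNReal.ofReal s₁ * einv A (ENNReal.ofReal (s₂/s₁) *
            ((ENNReal.ofReal s₂)⁻¹ * ∫⁻ r in Set.Ioi (s₂ ^ (-(((n:ℝ)-1)/n))), Φ r)) := by
          rw [harith, mul_assoc]
      _ ≤ ENNReal.ofReal s₁ * (ENNReal.ofReal (s₂/s₁) *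
            einv A ((ENNReal.ofReal s₂)⁻¹ * ∫⁻ r in Set.Ioi (s₂ ^ (-(((n:ℝ)-1)/n))), Φ r)) :=
          mul_le_mul_right (einv_mul_le hA hl _) _
      _ = Theta A N n s₂ := by
          rw [Theta, hXis2, ← mul_assoc, ← ENNReal.ofReal_mul h1.le,
            mul_div_cancel₀ _ (ne_of_gt h1)]

lemma invE_le_ofReal {Θ : ℝ → ℝ≥0∞} {τ s : ℝ} (hs : 0 < s) (h : ENNReal.ofReal τ < Θ s) :
    invE Θ τ ≤ ENNReal.ofReal s := sInf_le ⟨s, hs, rfl, h⟩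

lemma lt_of_invE_lt {Θ : ℝ → ℝ≥0∞} (hΘ : Monotone Θ) {τ s : ℝ} (_hs : 0 < s)
    (h : invE Θ τ < ENNReal.ofReal s) : ENNReal.ofReal τ < Θ s := by
  obtain ⟨x, hx, hxs⟩ := sInf_lt_iff.1 h
  obtain ⟨s₀, hs₀, rfl, hΘs₀⟩ := hx
  have hss : s₀ ≤ s := by
    by_contra hc
    push_neg at hc
    exact absurd (ENNReal.ofReal_le_ofReal hc.le) (not_le.2 hxs)
  exact hΘs₀.trans_le (hΘ hss)

lemma lint_rpow {e a b : ℝ} (he : 0 < e) (ha : 0 < a) (hab : a ≤ b) :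
    ∫⁻ s in Set.Ioc a b, ENNReal.ofReal (s ^ (-e-1)) = ENNReal.ofReal ((a ^ (-e) - b ^ (-e))/e) := by
  have hcont : ContinuousOn (fun s : ℝ => s ^ (-e-1)) (Set.Icc a b) := by
    intro x hx
    exact (Real.continuousAt_rpow_const x _ (Or.inl (ne_of_gt (lt_of_lt_of_le ha hx.1)))).continuousWithinAt
  have hint : IntegrableOn (fun s : ℝ => s ^ (-e-1)) (Set.Ioc a b) :=
    (hcont.integrableOn_compact isCompact_Icc).mono_set Set.Ioc_subset_Icc_self
  have hnn : 0 ≤ᵐ[volume.restrict (Set.Ioc a b)] fun s : ℝ => s ^ (-e-1) := by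
    refine (ae_restrict_iff' measurableSet_Ioc).2 (ae_of_all _ fun s hs => ?_)
    exact Real.rpow_nonneg (ha.trans hs.1).le _
  rw [← MeasureTheory.ofReal_integral_eq_lintegral_ofReal hint hnn]
  congr 1
  have h0 : (0:ℝ) ∉ Set.uIcc a b := Set.notMem_uIcc_of_lt ha (ha.trans_le hab)
  have hne : -e - 1 ≠ -1 := by linarith
  rw [← intervalIntegral.integral_of_le hab, integral_rpow (Or.inr ⟨hne, h0⟩)]
  have hexp : -e - 1 + 1 = -e := by ring
  rw [hexp]
  rw [div_neg, ← neg_div, neg_sub]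

lemma lint_rpow_top {e b : ℝ} (he : 0 < e) (he1 : e < 1) (hb : 0 < b) :
    ∫⁻ s in Set.Ioc (0:ℝ) b, ENNReal.ofReal (s ^ (-e-1)) = ⊤ := by
  by_contra hc
  set I := ∫⁻ s in Set.Ioc (0:ℝ) b, ENNReal.ofReal (s ^ (-e-1)) with hI
  set M := I.toReal with hM
  have hM0 : 0 ≤ M := ENNReal.toReal_nonneg
  set K := e * (M + 1) + b ^ (-e) with hK
  have hK0 : 0 < K := by
    have : 0 < b ^ (-e) := Real.rpow_pos_of_pos hb _
    nlinarith
  set a := min b (K ^ (-(1/e))) with ha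
  have haK : 0 < K ^ (-(1/e)) := Real.rpow_pos_of_pos hK0 _
  have ha0 : 0 < a := lt_min hb haK
  have hab : a ≤ b := min_le_left _ _
  have haKle : a ≤ K ^ (-(1/e)) := min_le_right _ _
  have hKa : K ≤ a ^ (-e) := by
    have h1 : (K ^ (-(1/e))) ^ (-e) ≤ a ^ (-e) :=
      Real.rpow_le_rpow_of_nonpos ha0 haKle (neg_nonpos.2 he.le)
    calc K = K ^ ((-(1/e)) * (-e)) := by
          rw [show (-(1/e)) * (-e) = 1 by field_simp, Real.rpow_one]
      _ = (K ^ (-(1/e))) ^ (-e) := Real.rpow_mul hK0.le _ _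
      _ ≤ a ^ (-e) := h1
  have hlow : ENNReal.ofReal ((a ^ (-e) - b ^ (-e))/e) ≤ I := by
    rw [← lint_rpow he ha0 hab]
    exact lintegral_mono_set (Set.Ioc_subset_Ioc_left ha0.le)
  have hval : M + 1 ≤ (a ^ (-e) - b ^ (-e))/e := by
    rw [le_div_iff₀ he]
    nlinarith
  have hIne : I ≠ ⊤ := hc
  have := ENNReal.toReal_mono hIne hlow
  rw [ENNReal.toReal_ofReal (by nlinarith : (0:ℝ) ≤ (a ^ (-e) - b ^ (-e))/e)] at this
  rw [← hM] at this
  linarith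

lemma layer_eq (x : ℝ≥0∞) :
    ∫⁻ τ in Set.Ioi (0:ℝ), (if ENNReal.ofReal τ < x then (1:ℝ≥0∞) else 0) = x := by
  have hmeas : MeasurableSet {τ : ℝ | ENNReal.ofReal τ < x} :=
    measurableSet_lt ENNReal.measurable_ofReal measurable_const
  have hrw : (fun τ : ℝ => (if ENNReal.ofReal τ < x then (1:ℝ≥0∞) else 0))
      = {τ : ℝ | ENNReal.ofReal τ < x}.indicator (fun _ => 1) := by
    ext τ
    by_cases h : ENNReal.ofReal τ < x
    · simp [h, Set.indicator_of_mem (h : τ ∈ {τ : ℝ | ENNReal.ofReal τ < x})]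
    · simp [h, Set.indicator_of_notMem (h : τ ∉ {τ : ℝ | ENNReal.ofReal τ < x})]
  rw [hrw, lintegral_indicator hmeas, setLIntegral_one, Measure.restrict_apply hmeas]
  rcases eq_or_ne x ⊤ with rfl | hx
  · have : {τ : ℝ | ENNReal.ofReal τ < ⊤} = Set.univ := by
      ext τ; simp [ENNReal.ofReal_lt_top]
    rw [this, Set.univ_inter, Real.volume_Ioi]
  · have hset : {τ : ℝ | ENNReal.ofReal τ < x} ∩ Set.Ioi 0 = Set.Ioo 0 x.toReal := by
      ext τ
      simp only [Set.mem_inter_iff, Set.mem_setOf_eq, Set.mem_Ioi, Set.mem_Ioo]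
      constructor
      · rintro ⟨h1, h2⟩
        exact ⟨h2, (ENNReal.ofReal_lt_iff_lt_toReal h2.le hx).1 h1⟩
      · rintro ⟨h1, h2⟩
        exact ⟨(ENNReal.ofReal_lt_iff_lt_toReal h1.le hx).2 h2, h1⟩
    rw [hset, Real.volume_Ioo, sub_zero, ENNReal.ofReal_toReal hx]

lemma key_equiv (Θ : ℝ → ℝ≥0∞) (hΘ : Monotone Θ) {e : ℝ} (he : 0 < e) (he1 : e < 1) :
    (∃ δ > (0:ℝ), (∫⁻ s in Set.Ioc (0:ℝ) δ, ENNReal.ofReal (s ^ (-e-1)) * Θ s) < ⊤) ↔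
    (∃ δ' > (0:ℝ), (∫⁻ r in Set.Ioc (0:ℝ) δ', (invE Θ r) ^ (-e)) < ⊤) := by
  have hΘm : Measurable Θ := hΘ.measurable
  set f : ℝ → ℝ → ℝ≥0∞ :=
    fun s τ => ENNReal.ofReal (s ^ (-e-1)) * (if ENNReal.ofReal τ < Θ s then 1 else 0) with hf
  have hfm : Measurable (Function.uncurry f) := by
    have h1 : Measurable fun p : ℝ × ℝ => ENNReal.ofReal (p.1 ^ (-e-1)) :=
      (measurable_fst.pow measurable_const).ennreal_ofReal
    have h2 : Measurable fun p : ℝ × ℝ => (if ENNReal.ofReal p.2 < Θ p.1 then (1:ℝ≥0∞) else 0) :=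
      Measurable.ite (measurableSet_lt (ENNReal.measurable_ofReal.comp measurable_snd)
        (hΘm.comp measurable_fst)) measurable_const measurable_const
    exact h1.mul h2
  -- identity via layer cake + Tonelli
  have hIdent : ∀ δ : ℝ, 0 < δ →
      (∫⁻ s in Set.Ioc (0:ℝ) δ, ENNReal.ofReal (s ^ (-e-1)) * Θ s)
        = ∫⁻ τ in Set.Ioi (0:ℝ), ∫⁻ s in Set.Ioc (0:ℝ) δ, f s τ := by
    intro δ _
    calc (∫⁻ s in Set.Ioc (0:ℝ) δ, ENNReal.ofReal (s ^ (-e-1)) * Θ s)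
        = ∫⁻ s in Set.Ioc (0:ℝ) δ, ∫⁻ τ in Set.Ioi (0:ℝ), f s τ := by
          refine lintegral_congr fun s => ?_
          exact ((lintegral_const_mul' _ _ ENNReal.ofReal_ne_top).trans (by rw [layer_eq])).symm
      _ = ∫⁻ τ in Set.Ioi (0:ℝ), ∫⁻ s in Set.Ioc (0:ℝ) δ, f s τ :=
          lintegral_lintegral_swap hfm.aemeasurable
  -- upper bound for the inner integral
  have hP1 : ∀ δ : ℝ, 0 < δ → ∀ τ : ℝ, (∫⁻ s in Set.Ioc (0:ℝ) δ, f s τ)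
      ≤ ENNReal.ofReal (1/e) * (invE Θ τ) ^ (-e) := by
    intro δ hδ τ
    have hoe : ENNReal.ofReal (1/e) ≠ 0 := by
      simp only [ne_eq, ENNReal.ofReal_eq_zero, not_le]; positivity
    rcases eq_or_ne (invE Θ τ) 0 with h0 | h0
    · rw [h0, ENNReal.zero_rpow_of_neg (by linarith), ENNReal.mul_top hoe]
      exact le_top
    rcases eq_or_ne (invE Θ τ) ⊤ with htop | htop
    · have hall : ∀ s ∈ Set.Ioc (0:ℝ) δ, f s τ = 0 := by
        intro s hs
        have hns : ¬ ENNReal.ofReal τ < Θ s := by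
          intro hlt
          have h1 := invE_le_ofReal hs.1 hlt
          rw [htop] at h1
          exact ENNReal.ofReal_ne_top (top_le_iff.1 h1)
        simp [hf, hns]
      rw [setLIntegral_congr_fun_ae measurableSet_Ioc (ae_of_all _ hall)]
      simp
    · set m := (invE Θ τ).toReal with hm
      have hm0 : 0 < m := ENNReal.toReal_pos h0 htop
      have hmr : invE Θ τ = ENNReal.ofReal m := (ENNReal.ofReal_toReal htop).symm
      have hpt : ∀ s ∈ Set.Ioc (0:ℝ) δ, f s τ
          ≤ (Set.Ici m).indicator (fun s => ENNReal.ofReal (s ^ (-e-1))) s := by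
        intro s hs
        by_cases hsm : m ≤ s
        · rw [Set.indicator_of_mem (Set.mem_Ici.2 hsm)]
          calc f s τ ≤ ENNReal.ofReal (s ^ (-e-1)) * 1 :=
                mul_le_mul_right (by split <;> simp) _
            _ = ENNReal.ofReal (s ^ (-e-1)) := mul_one _
        · rw [Set.indicator_of_notMem (fun h => hsm (Set.mem_Ici.1 h))]
          have hns : ¬ ENNReal.ofReal τ < Θ s := by
            intro hlt
            have h1 := invE_le_ofReal hs.1 hlt
            rw [hmr] at h1
            exact hsm ((ENNReal.ofReal_le_ofReal_iff hs.1.le).1 h1)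
          simp [hf, hns]
      calc (∫⁻ s in Set.Ioc (0:ℝ) δ, f s τ)
          ≤ ∫⁻ s in Set.Ioc (0:ℝ) δ, (Set.Ici m).indicator (fun s => ENNReal.ofReal (s ^ (-e-1))) s :=
            lintegral_mono_ae ((ae_restrict_iff' measurableSet_Ioc).2 (ae_of_all _ hpt))
        _ = ∫⁻ s in Set.Ici m ∩ Set.Ioc (0:ℝ) δ, ENNReal.ofReal (s ^ (-e-1)) := by
            rw [lintegral_indicator measurableSet_Ici, Measure.restrict_restrict measurableSet_Ici]
        _ ≤ ∫⁻ s in Set.Icc m δ, ENNReal.ofReal (s ^ (-e-1)) := by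
            refine lintegral_mono_set ?_
            rintro s ⟨hs1, _, hs3⟩
            exact ⟨hs1, hs3⟩
        _ ≤ ENNReal.ofReal (1/e) * (invE Θ τ) ^ (-e) := by
            rcases le_or_gt m δ with hmδ | hmδ
            · rw [setLIntegral_congr Ioc_ae_eq_Icc.symm, lint_rpow he hm0 hmδ]
              rw [hmr, ENNReal.ofReal_rpow_of_pos hm0, ← ENNReal.ofReal_mul (by positivity)]
              apply ENNReal.ofReal_le_ofReal
              calc (m ^ (-e) - δ ^ (-e))/e ≤ m ^ (-e)/e := by
                    gcongr
                    linarith [Real.rpow_nonneg hδ.le (-e)]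
                _ = 1/e * m ^ (-e) := by ring
            · rw [Set.Icc_eq_empty (not_le.2 hmδ)]
              simp
  -- lower bound for the inner integral
  have hP2 : ∀ δ : ℝ, 0 < δ → ∀ τ : ℝ, invE Θ τ ≤ ENNReal.ofReal δ →
      (invE Θ τ) ^ (-e) ≤ (∫⁻ s in Set.Ioc (0:ℝ) δ, f s τ) + ENNReal.ofReal (δ ^ (-e)) := by
    intro δ hδ τ hle
    rcases eq_or_ne (invE Θ τ) 0 with h0 | h0
    · have hall : ∀ s ∈ Set.Ioc (0:ℝ) δ, f s τ = ENNReal.ofReal (s ^ (-e-1)) := by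
        intro s hs
        have hlt : ENNReal.ofReal τ < Θ s :=
          lt_of_invE_lt hΘ hs.1 (by rw [h0]; exact ENNReal.ofReal_pos.2 hs.1)
        simp [hf, hlt]
      rw [setLIntegral_congr_fun_ae measurableSet_Ioc (ae_of_all _ hall), lint_rpow_top he he1 hδ,
        top_add]
      exact le_top
    · have htop : invE Θ τ ≠ ⊤ := fun h => ENNReal.ofReal_ne_top (top_le_iff.1 (h ▸ hle))
      set m := (invE Θ τ).toReal with hm
      have hm0 : 0 < m := ENNReal.toReal_pos h0 htop
      have hmδ : m ≤ δ := by
        have h1 := ENNReal.toReal_mono ENNReal.ofReal_ne_top hle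
        rwa [ENNReal.toReal_ofReal hδ.le] at h1
      have hmr : invE Θ τ = ENNReal.ofReal m := (ENNReal.ofReal_toReal htop).symm
      have hge : ENNReal.ofReal ((m ^ (-e) - δ ^ (-e))/e) ≤ ∫⁻ s in Set.Ioc (0:ℝ) δ, f s τ := by
        rw [← lint_rpow he hm0 hmδ]
        calc ∫⁻ s in Set.Ioc m δ, ENNReal.ofReal (s ^ (-e-1))
            = ∫⁻ s in Set.Ioc m δ, f s τ := by
              refine setLIntegral_congr_fun_ae measurableSet_Ioc (ae_of_all _ fun s hs => ?_)
              have hlt : ENNReal.ofReal τ < Θ s := by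
                refine lt_of_invE_lt hΘ (hm0.trans hs.1) ?_
                rw [hmr]
                exact ENNReal.ofReal_lt_ofReal_iff_of_nonneg hm0.le |>.2 hs.1
              simp [hf, hlt]
          _ ≤ ∫⁻ s in Set.Ioc (0:ℝ) δ, f s τ :=
              lintegral_mono_set (Set.Ioc_subset_Ioc_left hm0.le)
      have hnn : 0 ≤ m ^ (-e) - δ ^ (-e) :=
        sub_nonneg.2 (Real.rpow_le_rpow_of_nonpos hm0 hmδ (neg_nonpos.2 he.le))
      rw [hmr, ENNReal.ofReal_rpow_of_pos hm0]
      calc ENNReal.ofReal (m ^ (-e))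
          = ENNReal.ofReal (m ^ (-e) - δ ^ (-e)) + ENNReal.ofReal (δ ^ (-e)) := by
            rw [← ENNReal.ofReal_add hnn (Real.rpow_nonneg hδ.le _), sub_add_cancel]
        _ ≤ (∫⁻ s in Set.Ioc (0:ℝ) δ, f s τ) + ENNReal.ofReal (δ ^ (-e)) := by
            refine add_le_add_left (le_trans ?_ hge) _
            apply ENNReal.ofReal_le_ofReal
            rw [le_div_iff₀ he]
            nlinarith
  constructor
  · rintro ⟨δ, hδ, hI⟩
    rw [hIdent δ hδ] at hI
    rcases eq_or_ne (Θ δ) 0 with hΘδ | hΘδ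
    · refine ⟨1, one_pos, ?_⟩
      have hub : ∀ τ : ℝ, ENNReal.ofReal δ ≤ invE Θ τ := by
        intro τ
        refine le_sInf ?_
        rintro x ⟨s, hs, rfl, hΘs⟩
        have hsδ : δ ≤ s := by
          by_contra hcon
          push_neg at hcon
          have h1 : Θ s ≤ Θ δ := hΘ hcon.le
          rw [hΘδ] at h1
          exact absurd (lt_of_lt_of_le hΘs h1) (by simp)
        exact ENNReal.ofReal_le_ofReal hsδ
      calc ∫⁻ r in Set.Ioc (0:ℝ) 1, (invE Θ r) ^ (-e)
          ≤ ∫⁻ _ in Set.Ioc (0:ℝ) 1, ENNReal.ofReal (δ ^ (-e)) := by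
            refine lintegral_mono fun r => ?_
            rw [← ENNReal.ofReal_rpow_of_pos hδ, ENNReal.rpow_neg, ENNReal.rpow_neg]
            exact ENNReal.inv_le_inv.2 (ENNReal.rpow_le_rpow (hub r) he.le)
        _ = ENNReal.ofReal (δ ^ (-e)) * volume (Set.Ioc (0:ℝ) 1) := setLIntegral_const _ _
        _ < ⊤ := ENNReal.mul_lt_top ENNReal.ofReal_lt_top (by simp [Real.volume_Ioc])
    · obtain ⟨δ', h1', h2'⟩ : ∃ r : ℝ, 0 < ENNReal.ofReal r ∧ ENNReal.ofReal r < Θ δ := by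
        obtain ⟨r, _, hr1, hr2⟩ := ENNReal.lt_iff_exists_real_btwn.1 (pos_iff_ne_zero.2 hΘδ)
        exact ⟨r, hr1, hr2⟩
      have hδ'pos : 0 < δ' := ENNReal.ofReal_pos.1 h1'
      refine ⟨δ', hδ'pos, ?_⟩
      have hbd : ∀ τ ∈ Set.Ioc (0:ℝ) δ', (invE Θ τ) ^ (-e)
          ≤ (∫⁻ s in Set.Ioc (0:ℝ) δ, f s τ) + ENNReal.ofReal (δ ^ (-e)) := by
        intro τ hτ
        refine hP2 δ hδ τ (invE_le_ofReal hδ ?_)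
        exact lt_of_le_of_lt (ENNReal.ofReal_le_ofReal hτ.2) h2'
      have hInnMeas : Measurable fun τ => ∫⁻ s in Set.Ioc (0:ℝ) δ, f s τ :=
        Measurable.lintegral_prod_left hfm
      calc ∫⁻ τ in Set.Ioc (0:ℝ) δ', (invE Θ τ) ^ (-e)
          ≤ ∫⁻ τ in Set.Ioc (0:ℝ) δ', ((∫⁻ s in Set.Ioc (0:ℝ) δ, f s τ) + ENNReal.ofReal (δ ^ (-e))) :=
            lintegral_mono_ae ((ae_restrict_iff' measurableSet_Ioc).2 (ae_of_all _ hbd))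
        _ = (∫⁻ τ in Set.Ioc (0:ℝ) δ', ∫⁻ s in Set.Ioc (0:ℝ) δ, f s τ)
              + ENNReal.ofReal (δ ^ (-e)) * volume (Set.Ioc (0:ℝ) δ') := by
            rw [lintegral_add_left hInnMeas, setLIntegral_const]
        _ ≤ (∫⁻ τ in Set.Ioi (0:ℝ), ∫⁻ s in Set.Ioc (0:ℝ) δ, f s τ)
              + ENNReal.ofReal (δ ^ (-e)) * volume (Set.Ioc (0:ℝ) δ') :=
            add_le_add_left (lintegral_mono_set Set.Ioc_subset_Ioi_self) _
        _ < ⊤ := ENNReal.add_lt_top.2 ⟨hI,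
            ENNReal.mul_lt_top ENNReal.ofReal_lt_top (by simp [Real.volume_Ioc])⟩
  · rintro ⟨δ', hδ', hJ⟩
    have hex : ∃ τ₀ ∈ Set.Ioo (0:ℝ) δ', invE Θ τ₀ ≠ 0 := by
      by_contra hcon
      push_neg at hcon
      have htopint : (∫⁻ r in Set.Ioc (0:ℝ) δ', (invE Θ r) ^ (-e)) = ⊤ := by
        refine top_le_iff.1 ?_
        calc (⊤:ℝ≥0∞) = ⊤ * volume (Set.Ioo (0:ℝ) δ') := by
              rw [ENNReal.top_mul]
              simp only [Real.volume_Ioo, sub_zero, ne_eq, ENNReal.ofReal_eq_zero, not_le]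
              exact hδ'
          _ = ∫⁻ r in Set.Ioo (0:ℝ) δ', (invE Θ r) ^ (-e) := by
              rw [← setLIntegral_const]
              refine (setLIntegral_congr_fun_ae measurableSet_Ioo (ae_of_all _ fun r hr => ?_)).symm
              rw [hcon r hr, ENNReal.zero_rpow_of_neg (by linarith)]
          _ ≤ ∫⁻ r in Set.Ioc (0:ℝ) δ', (invE Θ r) ^ (-e) :=
              lintegral_mono_set Set.Ioo_subset_Ioc_self
      rw [htopint] at hJ
      exact absurd hJ (lt_irrefl _)
    obtain ⟨τ₀, hτ₀, hσ0⟩ := hex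
    obtain ⟨δ, h1δ, h2δ⟩ : ∃ r : ℝ, 0 < ENNReal.ofReal r ∧ ENNReal.ofReal r < invE Θ τ₀ := by
      obtain ⟨r, _, hr1, hr2⟩ := ENNReal.lt_iff_exists_real_btwn.1 (pos_iff_ne_zero.2 hσ0)
      exact ⟨r, hr1, hr2⟩
    have hδ : 0 < δ := ENNReal.ofReal_pos.1 h1δ
    refine ⟨δ, hδ, ?_⟩
    rw [hIdent δ hδ]
    have hzero : ∀ τ ∈ Set.Ioi τ₀, (∫⁻ s in Set.Ioc (0:ℝ) δ, f s τ) = 0 := by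
      intro τ hτ
      have hpt : ∀ s ∈ Set.Ioc (0:ℝ) δ, f s τ = 0 := by
        intro s hs
        have hns : ¬ ENNReal.ofReal τ < Θ s := by
          intro hlt
          have h1 : ENNReal.ofReal τ₀ < Θ s :=
            lt_of_le_of_lt (ENNReal.ofReal_le_ofReal (le_of_lt hτ)) hlt
          have h2 := invE_le_ofReal hs.1 h1
          have h3 : invE Θ τ₀ ≤ ENNReal.ofReal δ := h2.trans (ENNReal.ofReal_le_ofReal hs.2)
          exact absurd h3 (not_le.2 h2δ)
        simp [hf, hns]
      rw [setLIntegral_congr_fun_ae measurableSet_Ioc (ae_of_all _ hpt)]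
      simp
    calc ∫⁻ τ in Set.Ioi (0:ℝ), ∫⁻ s in Set.Ioc (0:ℝ) δ, f s τ
        ≤ (∫⁻ τ in Set.Ioc (0:ℝ) τ₀, ∫⁻ s in Set.Ioc (0:ℝ) δ, f s τ)
            + ∫⁻ τ in Set.Ioi τ₀, ∫⁻ s in Set.Ioc (0:ℝ) δ, f s τ := by
          refine le_trans (lintegral_mono_set ?_) (lintegral_union_le _ _ _)
          intro x hx
          rcases le_or_gt x τ₀ with h | h
          · exact Or.inl ⟨hx, h⟩
          · exact Or.inr h
      _ = (∫⁻ τ in Set.Ioc (0:ℝ) τ₀, ∫⁻ s in Set.Ioc (0:ℝ) δ, f s τ) + 0 := by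
          congr 1
          rw [setLIntegral_congr_fun_ae measurableSet_Ioi (ae_of_all _ hzero)]
          simp
      _ ≤ (∫⁻ τ in Set.Ioc (0:ℝ) τ₀, ENNReal.ofReal (1/e) * (invE Θ τ) ^ (-e)) + 0 :=
          add_le_add_left (lintegral_mono fun τ => hP1 δ hδ τ) 0
      _ = ENNReal.ofReal (1/e) * ∫⁻ τ in Set.Ioc (0:ℝ) τ₀, (invE Θ τ) ^ (-e) := by
          rw [add_zero, lintegral_const_mul' _ _ ENNReal.ofReal_ne_top]
      _ ≤ ENNReal.ofReal (1/e) * ∫⁻ τ in Set.Ioc (0:ℝ) δ', (invE Θ τ) ^ (-e) :=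
          mul_le_mul_right (lintegral_mono_set (Set.Ioc_subset_Ioc_right hτ₀.2.le)) _
      _ < ⊤ := ENNReal.mul_lt_top ENNReal.ofReal_lt_top hJ

theorem condG_iff_inv_integrable (n : ℕ) (hn : 2 ≤ n) (A N : ℝ → ℝ)
    (hA : IsYoung A) (hN : IsYoung N) (hnabla : Nabla2Global A) :
    CondG A N n ↔
    ∃ δ' > (0:ℝ),
      (∫⁻ r in Set.Ioc (0:ℝ) δ',
        (invE (Theta A N n) r) ^ (-(((n:ℝ)-1)/n))) < ⊤ := by
  have h2 : (2:ℝ) ≤ (n:ℝ) := by exact_mod_cast hn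
  have hn0 : (0:ℝ) < n := by linarith
  have he : 0 < ((n:ℝ)-1)/n := div_pos (by linarith) hn0
  have he1 : ((n:ℝ)-1)/n < 1 := (div_lt_one hn0).2 (by linarith)
  have hmono : Monotone (Theta A N n) := theta_mono A N n hA he.le
  have hkey := key_equiv (Theta A N n) hmono he he1
  have hEq : ∀ δ : ℝ, 0 < δ →
      (∫⁻ s in Set.Ioc (0:ℝ) δ, ENNReal.ofReal (s ^ (-(((n:ℝ)-1)/n))) * einv A (Xi A N n s))
      = ∫⁻ s in Set.Ioc (0:ℝ) δ, ENNReal.ofReal (s ^ (-(((n:ℝ)-1)/n)-1)) * Theta A N n s := by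
    intro δ hδ
    refine setLIntegral_congr_fun_ae measurableSet_Ioc (ae_of_all _ fun s hs => ?_)
    have hs0 : 0 < s := hs.1
    have hpow : s ^ (-(((n:ℝ)-1)/n)-1) * s = s ^ (-(((n:ℝ)-1)/n)) := by
      nth_rewrite 2 [show s = s ^ (1:ℝ) by rw [Real.rpow_one]]
      rw [← Real.rpow_add hs0]
      ring_nf
    rw [Theta, ← mul_assoc, ← ENNReal.ofReal_mul (Real.rpow_nonneg hs0.le _), hpow]
  constructor
  · rintro ⟨δ, hδ, hI⟩
    rw [hEq δ hδ] at hI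
    exact hkey.1 ⟨δ, hδ, hI⟩
  · intro h
    obtain ⟨δ, hδ, hI⟩ := hkey.2 h
    exact ⟨δ, hδ, by rw [hEq δ hδ]; exact hI⟩
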